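/- Assume λ₀ ≠ κ₀ and set R₀ := (1/2)·min{λ₀, κ₀, |λ₀ − κ₀|}. For a nonzero integer n define f_n(z) := z³ − (λ₀+κ₀)z² + (λ₀κ₀ + (R²θ̄/c₀ + Rθ̄)/n²)·z − Rθ̄κ₀/n²; then for every nonzero integer n and every z ∈ ℂ, P_n(ū + inz) = 0 if and only if f_n(z) = 0. Moreover there exist N ∈ ℕ and C > 0 such that for every integer n with |n| ≥ N: f_n has exactly one root in each of the open balls B(0, R₀), B(λ₀, R₀) and B(κ₀, R₀); every root z of f_n with |z| < R₀ satisfies |z − Rθ̄/(λ₀n²)| ≤ C/n⁴; every root z of f_n with |z − λ₀| < R₀ satisfies |z − λ₀| ≤ C/n²; and every root z of f_n with |z − κ₀| < R₀ satisfies |z − κ₀| ≤ C/n². -/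

import Mathlib

open Complex

/-- The characteristic cubic `P_n` of the matrix `R_n` arising from the non-barotropic
linearized compressible Navier–Stokes system. -/
noncomputable def Pcubic (lam kap u ρ θ R c : ℝ) (n : ℤ) (ν : ℂ) : ℂ :=
  ν ^ 3 - (((lam : ℂ) + (kap : ℂ)) * Complex.I * (n : ℂ) + 3 * (u : ℂ)) * ν ^ 2
    - ((lam : ℂ) * (kap : ℂ) * (n : ℂ) ^ 2
        - 2 * ((lam : ℂ) + (kap : ℂ)) * (u : ℂ) * Complex.I * (n : ℂ)
        - 3 * (u : ℂ) ^ 2 + (R : ℂ) ^ 2 * (θ : ℂ) / (c : ℂ) + (R : ℂ) * (θ : ℂ)) * ν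
    + (lam : ℂ) * (kap : ℂ) * (u : ℂ) * (n : ℂ) ^ 2
    - ((lam : ℂ) + (kap : ℂ)) * (u : ℂ) ^ 2 * Complex.I * (n : ℂ)
    - (u : ℂ) ^ 3 + (R : ℂ) ^ 2 * (θ : ℂ) / (c : ℂ) * (u : ℂ)
    + (R : ℂ) * (θ : ℂ) * (kap : ℂ) * Complex.I * (n : ℂ) + (R : ℂ) * (θ : ℂ) * (u : ℂ)

/-- The reduced cubic `f_n(z) = z³ − (λ₀+κ₀)z² + (λ₀κ₀ + (R²θ̄/c₀ + Rθ̄)/n²)z − Rθ̄κ₀/n²`. -/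
noncomputable def fcubic (lam kap θ R c : ℝ) (n : ℤ) (z : ℂ) : ℂ :=
  z ^ 3 - ((lam : ℂ) + (kap : ℂ)) * z ^ 2
    + ((lam : ℂ) * (kap : ℂ)
        + ((R : ℂ) ^ 2 * (θ : ℂ) / (c : ℂ) + (R : ℂ) * (θ : ℂ)) / (n : ℂ) ^ 2) * z
    - (R : ℂ) * (θ : ℂ) * (kap : ℂ) / (n : ℂ) ^ 2

private lemma cubic_factor (c2 c1 c0 : ℂ) :
    ∃ r1 r2 r3 : ℂ, ∀ z : ℂ,
      z^3 - c2*z^2 + c1*z - c0 = (z - r1) * ((z - r2) * (z - r3)) := by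
  classical
  set p : Polynomial ℂ := Polynomial.X^3 - Polynomial.C c2 * Polynomial.X^2
      + Polynomial.C c1 * Polynomial.X - Polynomial.C c0 with hp
  have hm : p.Monic := by unfold p; monicity!
  have hdeg : p.natDegree = 3 := by unfold p; compute_degree!
  have hsp : p.Splits := IsAlgClosed.splits p
  have hcard : Multiset.card p.roots = 3 := by
    rw [(Polynomial.splits_iff_card_roots).mp hsp, hdeg]
  obtain ⟨r1, r2, r3, hM⟩ := Multiset.card_eq_three.mp hcard
  refine ⟨r1, r2, r3, fun z => ?_⟩
  have hfac := hsp.eq_prod_roots_of_monic hm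
  have h2 := congrArg (Polynomial.eval z) hfac
  rw [hM] at h2
  simp only [Multiset.insert_eq_cons, Multiset.map_cons, Multiset.map_singleton,
    Multiset.prod_cons, Multiset.prod_singleton, Polynomial.eval_mul, Polynomial.eval_sub,
    Polynomial.eval_pow, Polynomial.eval_X, Polynomial.eval_C, Polynomial.eval_add, hp] at h2
  linear_combination h2

private lemma tri3 {A B C ρ : ℝ} (hρ : 0 < ρ) (hA : 0 ≤ A) (hB : 0 ≤ B) (hC : 0 ≤ C)
    (h : A * (B * C) < ρ^3) : A < ρ ∨ B < ρ ∨ C < ρ := by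
  by_contra h'
  push_neg at h'
  obtain ⟨h1, h2, h3⟩ := h'
  linarith [mul_le_mul (mul_le_mul h1 h2 hρ.le hA) h3 hρ.le (mul_nonneg hA hB)]

private lemma ball_disj {x y p q : ℂ} {r0 : ℝ} (hpq : 2*r0 ≤ ‖p - q‖)
    (hx : ‖x - p‖ < r0) (hy : ‖y - q‖ < r0) : x ≠ y := by
  intro h
  subst h
  have he : p - q = (x - q) - (x - p) := by ring
  have h2 := norm_sub_le (x - q) (x - p)
  rw [← he] at h2
  linarith

private lemma bound_from_eq {X P Q M d : ℝ} (hd : 0 < d) (hP : d ≤ P)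
    (hQM : Q ≤ M) (heq : X * P = Q) (hX : 0 ≤ X) : X ≤ M / d := by
  rw [le_div_iff₀ hd]
  calc X * d ≤ X * P := mul_le_mul_of_nonneg_left hP hX
  _ = Q := heq
  _ ≤ M := hQM

private lemma uniq3 {r1 r2 r3 z w bb cc : ℂ}
    (hz : z = r1 ∨ z = r2 ∨ z = r3) (hw : w = r1 ∨ w = r2 ∨ w = r3)
    (hb : bb = r1 ∨ bb = r2 ∨ bb = r3) (hc : cc = r1 ∨ cc = r2 ∨ cc = r3)
    (hzb : z ≠ bb) (hzc : z ≠ cc) (hwb : w ≠ bb) (hwc : w ≠ cc) (hbc : bb ≠ cc) : z = w := by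
  rcases hz with rfl|rfl|rfl <;> rcases hw with h|h|h <;> rcases hb with rfl|rfl|rfl <;>
    rcases hc with rfl|rfl|rfl <;> tauto

set_option maxHeartbeats 2000000 in
/-- With `R₀ = (1/2)min{λ₀, κ₀, |λ₀ − κ₀|}`: for every nonzero `n`,
`P_n(ū + inz) = 0 ↔ f_n(z) = 0`; and for `|n|` large, `f_n` has exactly one root in each
of the balls `B(0,R₀)`, `B(λ₀,R₀)`, `B(κ₀,R₀)`, the root in `B(0,R₀)` is within `C/n⁴`
of `Rθ̄/(λ₀n²)` and the roots in `B(λ₀,R₀)`, `B(κ₀,R₀)` are within `C/n²` of `λ₀`, `κ₀`. -/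
theorem roots_of_reduced_cubic (lam kap u ρ θ R c : ℝ) (hlam : 0 < lam) (hkap : 0 < kap)
    (hu : 0 < u) (hρ : 0 < ρ) (hθ : 0 < θ) (hR : 0 < R) (hc : 0 < c) (hne : lam ≠ kap) :
    (∀ n : ℤ, n ≠ 0 → ∀ z : ℂ,
      Pcubic lam kap u ρ θ R c n ((u : ℂ) + Complex.I * (n : ℂ) * z) = 0 ↔
        fcubic lam kap θ R c n z = 0) ∧
    ∃ N : ℕ, ∃ C > 0, ∀ n : ℤ, (N : ℤ) ≤ |n| →
      (∃! z : ℂ, ‖z‖ < min (min lam kap) |lam - kap| / 2 ∧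
        fcubic lam kap θ R c n z = 0) ∧
      (∃! z : ℂ, ‖z - (lam : ℂ)‖ < min (min lam kap) |lam - kap| / 2 ∧
        fcubic lam kap θ R c n z = 0) ∧
      (∃! z : ℂ, ‖z - (kap : ℂ)‖ < min (min lam kap) |lam - kap| / 2 ∧
        fcubic lam kap θ R c n z = 0) ∧
      (∀ z : ℂ, ‖z‖ < min (min lam kap) |lam - kap| / 2 →
        fcubic lam kap θ R c n z = 0 →
        ‖z - ((R * θ / (lam * (n : ℝ) ^ 2) : ℝ) : ℂ)‖ ≤ C / (n : ℝ) ^ 4) ∧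
      (∀ z : ℂ, ‖z - (lam : ℂ)‖ < min (min lam kap) |lam - kap| / 2 →
        fcubic lam kap θ R c n z = 0 →
        ‖z - (lam : ℂ)‖ ≤ C / (n : ℝ) ^ 2) ∧
      (∀ z : ℂ, ‖z - (kap : ℂ)‖ < min (min lam kap) |lam - kap| / 2 →
        fcubic lam kap θ R c n z = 0 →
        ‖z - (kap : ℂ)‖ ≤ C / (n : ℝ) ^ 2) := by
  have hcC : (c:ℂ) ≠ 0 := Complex.ofReal_ne_zero.mpr hc.ne'
  have hlamC : (lam:ℂ) ≠ 0 := Complex.ofReal_ne_zero.mpr hlam.ne'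
  constructor
  · -- Part 1
    intro n hn z
    have hnC : (n:ℂ) ≠ 0 := Int.cast_ne_zero.mpr hn
    have key : Pcubic lam kap u ρ θ R c n ((u : ℂ) + Complex.I * (n : ℂ) * z)
        = (Complex.I * (n:ℂ))^3 * fcubic lam kap θ R c n z := by
      unfold Pcubic fcubic
      field_simp
      ring_nf
      linear_combination (Complex.I * (-((n:ℂ)*z*(c:ℂ)*(R:ℂ)*(θ:ℂ))
        - (n:ℂ)*z*(R:ℂ)^2*(θ:ℂ) + (n:ℂ)*(c:ℂ)*(R:ℂ)*(θ:ℂ)*(kap:ℂ)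
        - (n:ℂ)^3*z*(c:ℂ)*(kap:ℂ)*(lam:ℂ))) * Complex.I_sq
    rw [key, mul_eq_zero]
    have h3 : (Complex.I * (n:ℂ))^3 ≠ 0 := pow_ne_zero _ (mul_ne_zero Complex.I_ne_zero hnC)
    exact or_iff_right h3
  · -- Part 2
    have hlk : 0 < |lam - kap| := abs_pos.mpr (sub_ne_zero.mpr hne)
    set r0 : ℝ := min (min lam kap) |lam - kap| / 2 with hr0def
    have hr0 : 0 < r0 := by
      rw [hr0def]
      have := lt_min (lt_min hlam hkap) hlk
      linarith
    have h2lam : 2*r0 ≤ lam := by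
      have h1 := min_le_left (min lam kap) |lam - kap|
      have h2 := min_le_left lam kap
      rw [hr0def]; linarith
    have h2kap : 2*r0 ≤ kap := by
      have h1 := min_le_left (min lam kap) |lam - kap|
      have h2 := min_le_right lam kap
      rw [hr0def]; linarith
    have h2d : 2*r0 ≤ |lam - kap| := by
      have h1 := min_le_right (min lam kap) |lam - kap|
      rw [hr0def]; linarith
    set a : ℝ := R^2*θ/c + R*θ with hadef
    set b : ℝ := R*θ*kap with hbdef
    have ha : 0 < a := by rw [hadef]; positivity
    have hb : 0 < b := by rw [hbdef]; positivity
    set K : ℝ := b + a*lam + a*kap with hKdef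
    have hK : 0 < K := by
      rw [hKdef]; linarith [mul_pos ha hlam, mul_pos ha hkap]
    set M2 : ℝ := b*(lam+kap) + a*(lam*kap) + b*r0 with hM2def
    have hM2 : 0 < M2 := by
      rw [hM2def]
      linarith [mul_pos hb (by linarith : (0:ℝ) < lam+kap), mul_pos ha (mul_pos hlam hkap),
        mul_pos hb hr0]
    set C2 : ℝ := (b + a*r0)*M2/(lam*(kap*(r0*r0*(r0*r0)))) with hC2def
    have hC2 : 0 < C2 := by
      rw [hC2def]
      have h1 : 0 < b + a*r0 := by linarith [mul_pos ha hr0]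
      positivity
    set C3 : ℝ := (b + a*(lam+r0))/(r0*r0) with hC3def
    have hC3 : 0 < C3 := by
      rw [hC3def]
      have h1 : 0 < b + a*(lam+r0) := by linarith [mul_pos ha (by linarith : (0:ℝ) < lam+r0)]
      positivity
    set C4 : ℝ := (b + a*(kap+r0))/(r0*r0) with hC4def
    have hC4 : 0 < C4 := by
      rw [hC4def]
      have h1 : 0 < b + a*(kap+r0) := by linarith [mul_pos ha (by linarith : (0:ℝ) < kap+r0)]
      positivity
    obtain ⟨N, hNgt⟩ := exists_nat_gt (max 1 (K/r0^3))
    refine ⟨N, max C2 (max C3 C4), lt_of_lt_of_le hC2 (le_max_left _ _), fun n hn => ?_⟩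
    -- basic facts about n
    have hnabs : (N:ℝ) ≤ |(n:ℝ)| := by exact_mod_cast hn
    have hN1 : (1:ℝ) < N := lt_of_le_of_lt (le_max_left _ _) hNgt
    have hNK : K/r0^3 < (N:ℝ) := lt_of_le_of_lt (le_max_right _ _) hNgt
    have hn1 : (1:ℝ) ≤ |(n:ℝ)| := le_trans hN1.le hnabs
    have hn0 : n ≠ 0 := by
      intro h
      subst h
      simp at hnabs
      rw [hnabs] at hN1
      norm_num at hN1
    have hnC : (n:ℂ) ≠ 0 := Int.cast_ne_zero.mpr hn0
    have hnR0 : (n:ℝ) ≠ 0 := Int.cast_ne_zero.mpr hn0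
    have hn2pos : 0 < (n:ℝ)^2 := by positivity
    have hn2one : 1 ≤ (n:ℝ)^2 := by
      have h := mul_le_mul hn1 hn1 (by norm_num) (abs_nonneg ((n:ℝ)))
      have h2 : |(n:ℝ)| * |(n:ℝ)| = (n:ℝ)^2 := by rw [← _root_.sq_abs ((n:ℝ))]; ring
      linarith
    have hKn : K/(n:ℝ)^2 < r0^3 := by
      rw [div_lt_iff₀ hn2pos]
      rw [div_lt_iff₀ (by positivity : (0:ℝ) < r0^3)] at hNK
      have habsle : |(n:ℝ)| ≤ (n:ℝ)^2 := by
        have h := mul_le_mul_of_nonneg_left hn1 (abs_nonneg ((n:ℝ)))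
        have h2 : |(n:ℝ)| * |(n:ℝ)| = (n:ℝ)^2 := by rw [← _root_.sq_abs ((n:ℝ))]; ring
        linarith
      have h1 : (N:ℝ) * r0^3 ≤ |(n:ℝ)| * r0^3 :=
        mul_le_mul_of_nonneg_right hnabs (by positivity)
      have h2 : |(n:ℝ)| * r0^3 ≤ (n:ℝ)^2 * r0^3 :=
        mul_le_mul_of_nonneg_right habsle (by positivity)
      linarith
    -- norms of basic constants
    have hnormlam : ‖(lam:ℂ)‖ = lam := by rw [Complex.norm_real]; exact abs_of_pos hlam
    have hnormkap : ‖(kap:ℂ)‖ = kap := by rw [Complex.norm_real]; exact abs_of_pos hkap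
    have hnormd : ‖(lam:ℂ) - (kap:ℂ)‖ = |lam - kap| := by
      rw [show (lam:ℂ) - (kap:ℂ) = ((lam - kap : ℝ):ℂ) from by push_cast; ring,
        Complex.norm_real, Real.norm_eq_abs]
    have hAbsN : ‖(n:ℂ)‖^2 = (n:ℝ)^2 := by
      rw [show ((n:ℂ)) = (((n:ℝ)):ℂ) from by push_cast; ring, Complex.norm_real, Real.norm_eq_abs, _root_.sq_abs]
    -- key identity
    have hkeyf : ∀ z : ℂ, fcubic lam kap θ R c n z
        = z*(z-(lam:ℂ))*(z-(kap:ℂ)) + ((a:ℂ)*z - (b:ℂ))/(n:ℂ)^2 := by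
      intro z
      rw [hadef, hbdef]
      unfold fcubic
      push_cast
      field_simp
      ring
    have hrootEq : ∀ z : ℂ, fcubic lam kap θ R c n z = 0 →
        z*(z-(lam:ℂ))*(z-(kap:ℂ))*(n:ℂ)^2 = (b:ℂ) - (a:ℂ)*z := by
      intro z hz
      have h := hkeyf z
      rw [hz] at h
      have h2 : z*(z-(lam:ℂ))*(z-(kap:ℂ)) + ((a:ℂ)*z - (b:ℂ))/(n:ℂ)^2 = 0 := h.symm
      field_simp at h2
      linear_combination h2
    have hnormEq : ∀ z : ℂ, fcubic lam kap θ R c n z = 0 →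
        ‖z‖ * ‖z-(lam:ℂ)‖ * ‖z-(kap:ℂ)‖ * (n:ℝ)^2 = ‖(b:ℂ) - (a:ℂ)*z‖ := by
      intro z hz
      have h := congrArg (fun x : ℂ => ‖x‖) (hrootEq z hz)
      simp only [norm_mul, norm_pow] at h
      rw [hAbsN] at h
      exact h
    -- bounds on the values at the centers
    have hf0 : ‖fcubic lam kap θ R c n 0‖ < r0^3 := by
      have e : fcubic lam kap θ R c n 0 = -((b:ℂ))/(n:ℂ)^2 := by rw [hkeyf 0]; ring
      rw [e, norm_div, norm_neg, norm_pow, hAbsN, Complex.norm_real, Real.norm_eq_abs, abs_of_pos hb]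
      calc b/(n:ℝ)^2 ≤ K/(n:ℝ)^2 := by
            apply div_le_div_of_nonneg_right ?_ hn2pos.le
            · rw [hKdef]; linarith [mul_pos ha hlam, mul_pos ha hkap]
      _ < r0^3 := hKn
    have hflam : ‖fcubic lam kap θ R c n (lam:ℂ)‖ < r0^3 := by
      have e : fcubic lam kap θ R c n (lam:ℂ) = (((a*lam - b : ℝ)):ℂ)/(n:ℂ)^2 := by
        rw [hkeyf]; push_cast; ring
      rw [e, norm_div, norm_pow, hAbsN, Complex.norm_real, Real.norm_eq_abs]
      have h1 : |a*lam - b| ≤ K := by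
        rw [hKdef]
        exact abs_le.mpr ⟨by linarith [mul_pos ha hlam, mul_pos ha hkap],
          by linarith [mul_pos ha hkap, hb]⟩
      calc |a*lam - b|/(n:ℝ)^2 ≤ K/(n:ℝ)^2 := by gcongr
      _ < r0^3 := hKn
    have hfkap : ‖fcubic lam kap θ R c n (kap:ℂ)‖ < r0^3 := by
      have e : fcubic lam kap θ R c n (kap:ℂ) = (((a*kap - b : ℝ)):ℂ)/(n:ℂ)^2 := by
        rw [hkeyf]; push_cast; ring
      rw [e, norm_div, norm_pow, hAbsN, Complex.norm_real, Real.norm_eq_abs]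
      have h1 : |a*kap - b| ≤ K := by
        rw [hKdef]
        exact abs_le.mpr ⟨by linarith [mul_pos ha hlam, mul_pos ha hkap],
          by linarith [mul_pos ha hlam, hb]⟩
      calc |a*kap - b|/(n:ℝ)^2 ≤ K/(n:ℝ)^2 := by gcongr
      _ < r0^3 := hKn
    -- factor the cubic
    obtain ⟨r1, r2, r3, hfac⟩ := cubic_factor ((lam:ℂ)+(kap:ℂ))
      ((lam:ℂ)*(kap:ℂ) + ((R:ℂ)^2*(θ:ℂ)/(c:ℂ) + (R:ℂ)*(θ:ℂ))/(n:ℂ)^2)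
      ((R:ℂ)*(θ:ℂ)*(kap:ℂ)/(n:ℂ)^2)
    have hffac : ∀ z : ℂ, fcubic lam kap θ R c n z = (z - r1)*((z - r2)*(z - r3)) := by
      intro z
      unfold fcubic
      exact hfac z
    have hmem : ∀ z : ℂ, fcubic lam kap θ R c n z = 0 → z = r1 ∨ z = r2 ∨ z = r3 := by
      intro z hz
      have h := hffac z
      rw [hz] at h
      rcases mul_eq_zero.mp h.symm with h1 | h2
      · exact Or.inl (sub_eq_zero.mp h1)
      · rcases mul_eq_zero.mp h2 with h3 | h4
        · exact Or.inr (Or.inl (sub_eq_zero.mp h3))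
        · exact Or.inr (Or.inr (sub_eq_zero.mp h4))
    have hex : ∀ p : ℂ, ‖fcubic lam kap θ R c n p‖ < r0^3 →
        ∃ w, (w = r1 ∨ w = r2 ∨ w = r3) ∧ ‖w - p‖ < r0 := by
      intro p hp
      rw [hffac p] at hp
      simp only [norm_mul] at hp
      rcases tri3 hr0 (norm_nonneg _) (norm_nonneg _) (norm_nonneg _) hp with h|h|h
      · exact ⟨r1, Or.inl rfl, by rwa [norm_sub_rev]⟩
      · exact ⟨r2, Or.inr (Or.inl rfl), by rwa [norm_sub_rev]⟩
      · exact ⟨r3, Or.inr (Or.inr rfl), by rwa [norm_sub_rev]⟩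
    obtain ⟨wa, hwa3, hwa0⟩ := hex 0 hf0
    obtain ⟨wb, hwb3, hwb⟩ := hex (lam:ℂ) hflam
    obtain ⟨wc, hwc3, hwc⟩ := hex (kap:ℂ) hfkap
    have hwa : ‖wa‖ < r0 := by simpa using hwa0
    have hfa : fcubic lam kap θ R c n wa = 0 := by
      rcases hwa3 with rfl|rfl|rfl <;> rw [hffac] <;> ring
    have hfb : fcubic lam kap θ R c n wb = 0 := by
      rcases hwb3 with rfl|rfl|rfl <;> rw [hffac] <;> ring
    have hfc : fcubic lam kap θ R c n wc = 0 := by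
      rcases hwc3 with rfl|rfl|rfl <;> rw [hffac] <;> ring
    -- disjointness of the three balls
    have hdisj0lam : ∀ x y : ℂ, ‖x‖ < r0 → ‖y - (lam:ℂ)‖ < r0 → x ≠ y := by
      intro x y hx hy
      refine ball_disj (p := 0) (q := (lam:ℂ)) ?_ (by simpa using hx) hy
      rw [zero_sub, norm_neg, hnormlam]; exact h2lam
    have hdisj0kap : ∀ x y : ℂ, ‖x‖ < r0 → ‖y - (kap:ℂ)‖ < r0 → x ≠ y := by
      intro x y hx hy
      refine ball_disj (p := 0) (q := (kap:ℂ)) ?_ (by simpa using hx) hy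
      rw [zero_sub, norm_neg, hnormkap]; exact h2kap
    have hdisjlk : ∀ x y : ℂ, ‖x - (lam:ℂ)‖ < r0 → ‖y - (kap:ℂ)‖ < r0 → x ≠ y := by
      intro x y hx hy
      refine ball_disj (p := (lam:ℂ)) (q := (kap:ℂ)) ?_ hx hy
      rw [hnormd]; exact h2d
    -- norm lower bounds used repeatedly
    have hQsmall : ∀ z : ℂ, ‖z‖ < r0 → ‖(b:ℂ) - (a:ℂ)*z‖ ≤ b + a*r0 := by
      intro z hz
      have h1 := norm_sub_le ((b:ℂ)) ((a:ℂ)*z)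
      simp only [norm_mul, Complex.norm_real, Real.norm_eq_abs] at h1
      rw [abs_of_pos hb, abs_of_pos ha] at h1
      linarith [mul_le_mul_of_nonneg_left hz.le ha.le]
    refine ⟨⟨wa, ⟨hwa, hfa⟩, ?_⟩, ⟨wb, ⟨hwb, hfb⟩, ?_⟩, ⟨wc, ⟨hwc, hfc⟩, ?_⟩, ?_, ?_, ?_⟩
    · -- uniqueness in B(0,r0)
      rintro y ⟨hy1, hy2⟩
      exact uniq3 (hmem y hy2) hwa3 hwb3 hwc3 (hdisj0lam y wb hy1 hwb)
        (hdisj0kap y wc hy1 hwc) (hdisj0lam wa wb hwa hwb) (hdisj0kap wa wc hwa hwc)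
        (hdisjlk wb wc hwb hwc)
    · -- uniqueness in B(lam,r0)
      rintro y ⟨hy1, hy2⟩
      exact uniq3 (hmem y hy2) hwb3 hwa3 hwc3 (hdisj0lam wa y hwa hy1).symm
        (hdisjlk y wc hy1 hwc) (hdisj0lam wa wb hwa hwb).symm (hdisjlk wb wc hwb hwc)
        (hdisj0kap wa wc hwa hwc)
    · -- uniqueness in B(kap,r0)
      rintro y ⟨hy1, hy2⟩
      exact uniq3 (hmem y hy2) hwc3 hwa3 hwb3 (hdisj0kap wa y hwa hy1).symm
        (hdisjlk wb y hwb hy1).symm (hdisj0kap wa wc hwa hwc).symm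
        (hdisjlk wb wc hwb hwc).symm (hdisj0lam wa wb hwa hwb)
    · -- quantitative bound near 0
      intro z hz1 hz2
      have hzl : r0 ≤ ‖z - (lam:ℂ)‖ := by
        have h := norm_sub_le z (z - (lam:ℂ))
        rw [show z - (z - (lam:ℂ)) = (lam:ℂ) from by ring, hnormlam] at h
        linarith
      have hzk : r0 ≤ ‖z - (kap:ℂ)‖ := by
        have h := norm_sub_le z (z - (kap:ℂ))
        rw [show z - (z - (kap:ℂ)) = (kap:ℂ) from by ring, hnormkap] at h
        linarith
      have hXP : ‖z‖ * (‖z-(lam:ℂ)‖ * (‖z-(kap:ℂ)‖ * (n:ℝ)^2)) = ‖(b:ℂ) - (a:ℂ)*z‖ := by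
        have h := hnormEq z hz2
        linear_combination h
      have hQ := hQsmall z hz1
      have hsmall : ‖z‖ ≤ (b + a*r0)/(r0*(r0*(n:ℝ)^2)) := by
        refine bound_from_eq (by positivity) ?_ hQ hXP (norm_nonneg _)
        calc r0*(r0*(n:ℝ)^2) ≤ ‖z-(lam:ℂ)‖*(r0*(n:ℝ)^2) :=
              mul_le_mul_of_nonneg_right hzl (by positivity)
        _ ≤ ‖z-(lam:ℂ)‖*(‖z-(kap:ℂ)‖*(n:ℝ)^2) :=
              mul_le_mul_of_nonneg_left
                (mul_le_mul_of_nonneg_right hzk (by positivity)) (norm_nonneg _)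
      have hw2 : ((R*θ/(lam*(n:ℝ)^2) : ℝ):ℂ) * ((n:ℂ)^2*((lam:ℂ)*(kap:ℂ))) = (b:ℂ) := by
        rw [hbdef]
        push_cast
        field_simp
      have hid : (z - ((R*θ/(lam*(n:ℝ)^2) : ℝ):ℂ))
            * ((n:ℂ)^2*((lam:ℂ)*(kap:ℂ))*((z-(lam:ℂ))*(z-(kap:ℂ))))
          = z*((b:ℂ)*((lam:ℂ)+(kap:ℂ)) - (a:ℂ)*((lam:ℂ)*(kap:ℂ)) - (b:ℂ)*z) := by
        linear_combination ((lam:ℂ)*(kap:ℂ))*(hrootEq z hz2)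
          - ((z-(lam:ℂ))*(z-(kap:ℂ)))*hw2
      have hid2 : ‖z - ((R*θ/(lam*(n:ℝ)^2) : ℝ):ℂ)‖
            * ((n:ℝ)^2*(lam*kap*(‖z-(lam:ℂ)‖*‖z-(kap:ℂ)‖)))
          = ‖z‖ * ‖(b:ℂ)*((lam:ℂ)+(kap:ℂ)) - (a:ℂ)*((lam:ℂ)*(kap:ℂ)) - (b:ℂ)*z‖ := by
        have h := congrArg (fun x : ℂ => ‖x‖) hid
        simp only [norm_mul, norm_pow] at h
        rw [hAbsN, hnormlam, hnormkap] at h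
        linear_combination h
      have hQ2 : ‖(b:ℂ)*((lam:ℂ)+(kap:ℂ)) - (a:ℂ)*((lam:ℂ)*(kap:ℂ)) - (b:ℂ)*z‖ ≤ M2 := by
        have h1 := norm_sub_le ((b:ℂ)*((lam:ℂ)+(kap:ℂ)) - (a:ℂ)*((lam:ℂ)*(kap:ℂ))) ((b:ℂ)*z)
        have h2 := norm_sub_le ((b:ℂ)*((lam:ℂ)+(kap:ℂ))) ((a:ℂ)*((lam:ℂ)*(kap:ℂ)))
        have e1 : ‖(b:ℂ)*((lam:ℂ)+(kap:ℂ))‖ = b*(lam+kap) := by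
          rw [show (b:ℂ)*((lam:ℂ)+(kap:ℂ)) = ((b*(lam+kap) : ℝ):ℂ) from by push_cast; ring,
            Complex.norm_real, Real.norm_eq_abs]
          exact abs_of_pos (mul_pos hb (by linarith))
        have e2 : ‖(a:ℂ)*((lam:ℂ)*(kap:ℂ))‖ = a*(lam*kap) := by
          rw [show (a:ℂ)*((lam:ℂ)*(kap:ℂ)) = ((a*(lam*kap) : ℝ):ℂ) from by push_cast; ring,
            Complex.norm_real, Real.norm_eq_abs]
          exact abs_of_pos (mul_pos ha (mul_pos hlam hkap))
        have e3 : ‖(b:ℂ)*z‖ ≤ b*r0 := by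
          rw [norm_mul, Complex.norm_real, Real.norm_eq_abs, abs_of_pos hb]
          exact mul_le_mul_of_nonneg_left hz1.le hb.le
        rw [e1, e2] at h2
        rw [hM2def]
        linarith
      have hfin : ‖z - ((R*θ/(lam*(n:ℝ)^2) : ℝ):ℂ)‖
          ≤ (((b + a*r0)/(r0*(r0*(n:ℝ)^2))) * M2) / ((n:ℝ)^2*(lam*kap*(r0*r0))) := by
        refine bound_from_eq (by positivity) ?_ ?_ hid2 (norm_nonneg _)
        · have h3 : r0*r0 ≤ ‖z-(lam:ℂ)‖*‖z-(kap:ℂ)‖ :=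
            mul_le_mul hzl hzk hr0.le (norm_nonneg _)
          exact mul_le_mul_of_nonneg_left
            (mul_le_mul_of_nonneg_left h3 ((mul_pos hlam hkap).le)) (by positivity)
        · exact mul_le_mul hsmall hQ2 (norm_nonneg _) (by positivity)
      calc ‖z - ((R*θ/(lam*(n:ℝ)^2) : ℝ):ℂ)‖
          ≤ (((b + a*r0)/(r0*(r0*(n:ℝ)^2))) * M2) / ((n:ℝ)^2*(lam*kap*(r0*r0))) := hfin
      _ = C2/(n:ℝ)^4 := by
          rw [hC2def]
          field_simp
      _ ≤ (max C2 (max C3 C4))/(n:ℝ)^4 := by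
          gcongr
          exact le_max_left _ _
    · -- quantitative bound near lam
      intro z hz1 hz2
      have hzge : r0 ≤ ‖z‖ := by
        have h := norm_sub_le z (z - (lam:ℂ))
        rw [show z - (z - (lam:ℂ)) = (lam:ℂ) from by ring, hnormlam] at h
        linarith
      have hzk : r0 ≤ ‖z - (kap:ℂ)‖ := by
        have h := norm_sub_le (z - (kap:ℂ)) (z - (lam:ℂ))
        rw [show (z - (kap:ℂ)) - (z - (lam:ℂ)) = (lam:ℂ)-(kap:ℂ) from by ring, hnormd] at h
        linarith
      have hzle : ‖z‖ ≤ lam + r0 := by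
        have h := norm_add_le (z - (lam:ℂ)) ((lam:ℂ))
        rw [show z - (lam:ℂ) + (lam:ℂ) = z from by ring, hnormlam] at h
        linarith
      have hQ : ‖(b:ℂ) - (a:ℂ)*z‖ ≤ b + a*(lam+r0) := by
        have h1 := norm_sub_le ((b:ℂ)) ((a:ℂ)*z)
        simp only [norm_mul, Complex.norm_real, Real.norm_eq_abs] at h1
        rw [abs_of_pos hb, abs_of_pos ha] at h1
        linarith [mul_le_mul_of_nonneg_left hzle ha.le]
      have hXP : ‖z - (lam:ℂ)‖ * (‖z‖*(‖z-(kap:ℂ)‖*(n:ℝ)^2)) = ‖(b:ℂ) - (a:ℂ)*z‖ := by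
        have h := hnormEq z hz2
        linear_combination h
      have hfin : ‖z - (lam:ℂ)‖ ≤ (b + a*(lam+r0))/(r0*(r0*(n:ℝ)^2)) := by
        refine bound_from_eq (by positivity) ?_ hQ hXP (norm_nonneg _)
        calc r0*(r0*(n:ℝ)^2) ≤ ‖z‖*(r0*(n:ℝ)^2) :=
              mul_le_mul_of_nonneg_right hzge (by positivity)
        _ ≤ ‖z‖*(‖z-(kap:ℂ)‖*(n:ℝ)^2) :=
              mul_le_mul_of_nonneg_left
                (mul_le_mul_of_nonneg_right hzk (by positivity)) (norm_nonneg _)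
      calc ‖z - (lam:ℂ)‖ ≤ (b + a*(lam+r0))/(r0*(r0*(n:ℝ)^2)) := hfin
      _ = C3/(n:ℝ)^2 := by
          rw [hC3def, div_div, mul_assoc]
      _ ≤ (max C2 (max C3 C4))/(n:ℝ)^2 := by
          gcongr
          exact le_trans (le_max_left C3 C4) (le_max_right _ _)
    · -- quantitative bound near kap
      intro z hz1 hz2
      have hzge : r0 ≤ ‖z‖ := by
        have h := norm_sub_le z (z - (kap:ℂ))
        rw [show z - (z - (kap:ℂ)) = (kap:ℂ) from by ring, hnormkap] at h
        linarith
      have hzl : r0 ≤ ‖z - (lam:ℂ)‖ := by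
        have h := norm_sub_le (z - (lam:ℂ)) (z - (kap:ℂ))
        rw [show (z - (lam:ℂ)) - (z - (kap:ℂ)) = (kap:ℂ)-(lam:ℂ) from by ring,
          norm_sub_rev, hnormd] at h
        linarith
      have hzle : ‖z‖ ≤ kap + r0 := by
        have h := norm_add_le (z - (kap:ℂ)) ((kap:ℂ))
        rw [show z - (kap:ℂ) + (kap:ℂ) = z from by ring, hnormkap] at h
        linarith
      have hQ : ‖(b:ℂ) - (a:ℂ)*z‖ ≤ b + a*(kap+r0) := by
        have h1 := norm_sub_le ((b:ℂ)) ((a:ℂ)*z)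
        simp only [norm_mul, Complex.norm_real, Real.norm_eq_abs] at h1
        rw [abs_of_pos hb, abs_of_pos ha] at h1
        linarith [mul_le_mul_of_nonneg_left hzle ha.le]
      have hXP : ‖z - (kap:ℂ)‖ * (‖z‖*(‖z-(lam:ℂ)‖*(n:ℝ)^2)) = ‖(b:ℂ) - (a:ℂ)*z‖ := by
        have h := hnormEq z hz2
        linear_combination h
      have hfin : ‖z - (kap:ℂ)‖ ≤ (b + a*(kap+r0))/(r0*(r0*(n:ℝ)^2)) := by
        refine bound_from_eq (by positivity) ?_ hQ hXP (norm_nonneg _)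
        calc r0*(r0*(n:ℝ)^2) ≤ ‖z‖*(r0*(n:ℝ)^2) :=
              mul_le_mul_of_nonneg_right hzge (by positivity)
        _ ≤ ‖z‖*(‖z-(lam:ℂ)‖*(n:ℝ)^2) :=
              mul_le_mul_of_nonneg_left
                (mul_le_mul_of_nonneg_right hzl (by positivity)) (norm_nonneg _)
      calc ‖z - (kap:ℂ)‖ ≤ (b + a*(kap+r0))/(r0*(r0*(n:ℝ)^2)) := hfin
      _ = C4/(n:ℝ)^2 := by
          rw [hC4def, div_div, mul_assoc]
      _ ≤ (max C2 (max C3 C4))/(n:ℝ)^2 := by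
          gcongr
          exact le_trans (le_max_right C3 C4) (le_max_right _ _)
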